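/- Let n, d, d' be positive integers and λ > 0. For each i = 1,…,n let h_i ∈ ℝ^d and let ℓ_i : ℝ^{d'} → ℝ be differentiable. Define the regularized loss L_λ : ℝ^{d'×d} → ℝ by L_λ(W) = (1/n)·Σ_{i=1}^n ℓ_i(W h_i) + (λ/2)·‖W‖_F². If W ∈ ℝ^{d'×d} is a critical point of L_λ (the total derivative of L_λ at W vanishes), then W^⊤ W = −(1/(nλ))·Σ_{i=1}^n (W^⊤ ∇ℓ_i(W h_i)) h_i^⊤, where ∇ℓ_i(W h_i) ∈ ℝ^{d'} is the gradient of ℓ_i at W h_i and (W^⊤ ∇ℓ_i(W h_i)) h_i^⊤ denotes the d×d outer-product matrix. -/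

import Mathlib

open Matrix

attribute [local instance] Matrix.frobeniusSeminormedAddCommGroup
  Matrix.frobeniusNormedAddCommGroup Matrix.frobeniusNormedSpace

/-- The gradient of a function `f : ℝ^k → ℝ`, as a plain vector `Fin k → ℝ`. -/
noncomputable def grad {k : ℕ} (f : EuclideanSpace ℝ (Fin k) → ℝ) (x : Fin k → ℝ) :
    Fin k → ℝ :=
  WithLp.equiv 2 (Fin k → ℝ) <| gradient f ((WithLp.equiv 2 (Fin k → ℝ)).symm x)

section aux
variable (n d d' : ℕ) (h : Fin n → Fin d → ℝ)

noncomputable def Amap (i : Fin n) : Matrix (Fin d') (Fin d) ℝ →L[ℝ] EuclideanSpace ℝ (Fin d') :=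
  LinearMap.toContinuousLinearMap
    { toFun := fun V => (WithLp.equiv 2 (Fin d' → ℝ)).symm (V.mulVec (h i))
      map_add' := by intro x y; ext a; simp [Matrix.add_mulVec]
      map_smul' := by intro c x; ext a; simp [Matrix.smul_mulVec] }

noncomputable def Emap (a : Fin d') (b : Fin d) : Matrix (Fin d') (Fin d) ℝ →L[ℝ] ℝ :=
  LinearMap.toContinuousLinearMap
    { toFun := fun V => V a b
      map_add' := fun _ _ => rfl
      map_smul' := fun _ _ => rfl }
end aux

set_option maxHeartbeats 1000000 in
/-- **Features at Convergence Theorem (FACT).** If `W` is a critical point of the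
regularized loss `L_λ(W) = (1/n) ∑ i, ℓ i (W h_i) + (λ/2) ‖W‖_F²`, then
`Wᵀ W = -(1/(nλ)) ∑ i (Wᵀ ∇ℓ_i(W h_i)) h_iᵀ`. -/
theorem features_at_convergence
    (n d d' : ℕ) (hn : 0 < n) (hd : 0 < d) (hd' : 0 < d')
    (lam : ℝ) (hlam : 0 < lam)
    (h : Fin n → Fin d → ℝ)
    (ℓ : Fin n → EuclideanSpace ℝ (Fin d') → ℝ)
    (hdiff : ∀ i, Differentiable ℝ (ℓ i))
    (W : Matrix (Fin d') (Fin d) ℝ)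
    (hcrit : fderiv ℝ
      (fun V : Matrix (Fin d') (Fin d) ℝ =>
        (1 / n : ℝ) * ∑ i, ℓ i ((WithLp.equiv 2 (Fin d' → ℝ)).symm (V.mulVec (h i)))
          + (lam / 2) * ∑ a : Fin d', ∑ b : Fin d, V a b ^ 2) W = 0) :
    Wᵀ * W = (-(1 / (n * lam))) •
      ∑ i, Matrix.vecMulVec (Wᵀ.mulVec (grad (ℓ i) (W.mulVec (h i)))) (h i) := by
  set A := Amap n d d' h with hA
  set E := Emap d d' with hE
  have hD : HasFDerivAt
      (fun V : Matrix (Fin d') (Fin d) ℝ =>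
        (1 / n : ℝ) * ∑ i, ℓ i ((WithLp.equiv 2 (Fin d' → ℝ)).symm (V.mulVec (h i)))
          + (lam / 2) * ∑ a : Fin d', ∑ b : Fin d, V a b ^ 2)
      ((1 / n : ℝ) • (∑ i, (fderiv ℝ (ℓ i) (A i W)).comp (A i))
        + (lam / 2) • (∑ a : Fin d', ∑ b : Fin d, (2 * W a b) • E a b)) W := by
    apply HasFDerivAt.add
    · apply HasFDerivAt.const_mul
      apply HasFDerivAt.fun_sum
      intro i _
      exact (((hdiff i) (A i W)).hasFDerivAt).comp W (A i).hasFDerivAt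
    · apply HasFDerivAt.const_mul
      apply HasFDerivAt.fun_sum
      intro a _
      apply HasFDerivAt.fun_sum
      intro b _
      have h1 : HasFDerivAt (fun V : Matrix (Fin d') (Fin d) ℝ => V a b) (E a b) W :=
        (E a b).hasFDerivAt
      have h2 := h1.mul h1
      have heq : (2 * W a b) • E a b = W a b • E a b + W a b • E a b := by
        rw [two_mul, add_smul]
      rw [heq]
      simp only [sq]; exact h2
  have hzero := hD.fderiv.symm.trans hcrit
  have key : ∀ (a : Fin d') (b : Fin d),
      W a b = -(1 / (n * lam)) * ∑ i, grad (ℓ i) (W.mulVec (h i)) a * h i b := by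
    intro a b
    have h0 : ((1 / n : ℝ) • (∑ i, (fderiv ℝ (ℓ i) (A i W)).comp (A i))
        + (lam / 2) • (∑ a : Fin d', ∑ b : Fin d, (2 * W a b) • E a b))
        (Matrix.single a b 1) = 0 := by rw [hzero]; rfl
    have hE1 : ∀ (a' : Fin d') (b' : Fin d),
        E a' b' (Matrix.single a b 1) = if a' = a ∧ b' = b then 1 else 0 := by
      intro a' b'
      simp [hE, Emap, Matrix.single, and_comm, eq_comm]; rfl
    have hgrad : ∀ i, (fderiv ℝ (ℓ i) (A i W)) (A i (Matrix.single a b 1))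
        = grad (ℓ i) (W.mulVec (h i)) a * h i b := by
      intro i
      have hmul : (Matrix.single a b 1).mulVec (h i)
          = fun c => if a = c then h i b else 0 := by
        funext c
        simp [Matrix.mulVec, dotProduct, Matrix.single, ite_and]
      have hdual : ∀ (u : EuclideanSpace ℝ (Fin d')),
          (fderiv ℝ (ℓ i) (A i W)) u = ∑ c, gradient (ℓ i) (A i W) c * u c := by
        intro u
        have ht := InnerProductSpace.toDual_symm_apply (𝕜 := ℝ)
          (E := EuclideanSpace ℝ (Fin d'))
          (y := fderiv ℝ (ℓ i) (A i W)) (x := u)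
        calc (fderiv ℝ (ℓ i) (A i W)) u
            = inner ℝ ((InnerProductSpace.toDual ℝ (EuclideanSpace ℝ (Fin d'))).symm
                (fderiv ℝ (ℓ i) (A i W))) u := ht.symm
          _ = ∑ c, gradient (ℓ i) (A i W) c * u c := by
              rw [PiLp.inner_apply]
              simp only [RCLike.inner_apply, conj_trivial]
              exact Finset.sum_congr rfl fun c _ => mul_comm _ _
      rw [hdual]
      have hAstd : A i (Matrix.single a b 1)
          = (WithLp.equiv 2 (Fin d' → ℝ)).symm ((Matrix.single a b 1).mulVec (h i)) := rfl
      rw [hAstd, hmul]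
      have hgc : ∀ c, gradient (ℓ i) (A i W) c = grad (ℓ i) (W.mulVec (h i)) c := fun c => rfl
      calc ∑ c, gradient (ℓ i) (A i W) c *
              ((WithLp.equiv 2 (Fin d' → ℝ)).symm fun c => if a = c then h i b else 0) c
          = ∑ c, grad (ℓ i) (W.mulVec (h i)) c * (if a = c then h i b else 0) := by
            refine Finset.sum_congr rfl fun c _ => by rw [hgc c]; rfl
        _ = grad (ℓ i) (W.mulVec (h i)) a * h i b := by
            rw [Finset.sum_eq_single a]
            · simp
            · intro c _ hc; simp [Ne.symm hc]
            · simp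
    have h0' : (1 / n : ℝ) * ∑ i, grad (ℓ i) (W.mulVec (h i)) a * h i b
        + lam * W a b = 0 := by
      simp only [ContinuousLinearMap.add_apply, ContinuousLinearMap.smul_apply,
        ContinuousLinearMap.sum_apply, ContinuousLinearMap.coe_comp', Function.comp_apply,
        ContinuousLinearMap.zero_apply] at h0
      rw [Finset.sum_congr rfl (fun i _ => hgrad i)] at h0
      have h2 : ∑ a' : Fin d', ∑ b' : Fin d,
          (2 * W a' b') • (E a' b') (Matrix.single a b 1) = 2 * W a b := by
        simp only [hE1, smul_eq_mul, mul_ite, mul_one, mul_zero]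
        simp [Finset.sum_ite_eq, ite_and]
      rw [h2] at h0
      rw [smul_eq_mul, smul_eq_mul] at h0
      linarith [h0]
    have hn' : (n : ℝ) ≠ 0 := Nat.cast_ne_zero.mpr hn.ne'
    have hl' : lam ≠ 0 := hlam.ne'
    field_simp at h0' ⊢
    nlinarith [h0']
  ext c b
  simp only [Matrix.mul_apply, Matrix.transpose_apply, Matrix.smul_apply, Matrix.sum_apply,
    Matrix.vecMulVec_apply, Matrix.mulVec, dotProduct, smul_eq_mul]
  rw [Finset.sum_congr rfl (fun a _ => by rw [key a b])]
  simp only [Finset.mul_sum, Finset.sum_mul]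
  rw [Finset.sum_comm]
  refine Finset.sum_congr rfl fun i _ => Finset.sum_congr rfl fun a _ => by ring
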